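/- arXiv:2409.20363 — 2 statements merged into one kernel-verified Lean document; each statement's English description precedes it below -/
import Mathlib

section
/- For 1 < α ≤ 2 and j ≥ 1, the coefficients ρ_j^{(α)} = (−1)^j Γ(α+1) / (Γ(α/2 − j + 1) Γ(α/2 + j + 1)) satisfy ρ_j^{(α)} ≤ 0, while ρ₀^{(α)} = Γ(α+1)/Γ(α/2+1)² ≥ 0. -/
/-- The coefficients `ρ_j^{(α)} = (−1)^j Γ(α+1)/(Γ(α/2 − j + 1)Γ(α/2 + j + 1))`. -/
noncomputable def rhoC (α : ℝ) (j : ℕ) : ℝ :=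
  (-1) ^ j * Real.Gamma (α + 1) /
    (Real.Gamma (α / 2 - j + 1) * Real.Gamma (α / 2 + j + 1))

lemma gamma_alt_sign (α : ℝ) (h1 : 1 < α) (h2 : α < 2) :
    ∀ j : ℕ, 0 < (-1:ℝ)^j * Real.Gamma (α/2 - j) := by
  intro j
  induction j with
  | zero => simpa using Real.Gamma_pos_of_pos (by linarith : (0:ℝ) < α/2)
  | succ j ih =>
    have hj : (0:ℝ) ≤ j := Nat.cast_nonneg j
    have hx : α/2 - ((j:ℝ)+1) < 0 := by linarith
    have hG : Real.Gamma (α/2 - j) = (α/2 - ((j:ℝ)+1)) * Real.Gamma (α/2 - ((j:ℝ)+1)) := by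
      have h := Real.Gamma_add_one (s := α/2 - ((j:ℝ)+1)) (ne_of_lt hx)
      have : α/2 - ((j:ℝ)+1) + 1 = α/2 - j := by ring
      rw [this] at h
      exact h
    rw [hG] at ih
    have hcast : ((j+1 : ℕ) : ℝ) = (j:ℝ) + 1 := by push_cast; ring
    rw [hcast, pow_succ]
    nlinarith [ih, hx]

lemma gamma_key (α : ℝ) (h1 : 1 < α) (h2 : α ≤ 2) (j : ℕ) (hj : 1 ≤ j) :
    (-1:ℝ)^j * Real.Gamma (α/2 - j + 1) ≤ 0 := by
  rcases lt_or_eq_of_le h2 with hlt | heq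
  · obtain ⟨k, rfl⟩ := Nat.exists_eq_add_of_le hj
    have h := gamma_alt_sign α h1 hlt k
    have hc : ((1 + k : ℕ) : ℝ) = (k:ℝ) + 1 := by push_cast; ring
    have harg : α/2 - ((1+k : ℕ):ℝ) + 1 = α/2 - k := by rw [hc]; ring
    rw [harg, pow_add]
    have : (-1:ℝ)^1 * (-1:ℝ)^k * Real.Gamma (α/2 - k) = -((-1:ℝ)^k * Real.Gamma (α/2 - k)) := by
      ring
    rw [this]
    linarith
  · subst heq
    rcases eq_or_lt_of_le hj with hj1 | hj2
    · -- j = 1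
      have : j = 1 := hj1.symm
      subst this
      norm_num [Real.Gamma_one]
    · -- j ≥ 2 : Gamma of nonpositive integer is 0
      have hz : Real.Gamma ((2:ℝ)/2 - j + 1) = 0 := by
        rw [Real.Gamma_eq_zero_iff]
        exact ⟨j - 2, by push_cast [Nat.cast_sub (by omega : 2 ≤ j)]; ring⟩
      rw [hz, mul_zero]

/-- For `1 < α ≤ 2` and `j ≥ 1` one has `ρ_j^{(α)} ≤ 0`, while
`ρ₀^{(α)} = Γ(α+1)/Γ(α/2+1)² ≥ 0`. -/
theorem stmt13 (α : ℝ) (h1 : 1 < α) (h2 : α ≤ 2) :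
    (∀ j : ℕ, 1 ≤ j → rhoC α j ≤ 0) ∧
      rhoC α 0 = Real.Gamma (α + 1) / (Real.Gamma (α / 2 + 1)) ^ 2 ∧
      0 ≤ rhoC α 0 := by
  have hΓα : 0 < Real.Gamma (α + 1) := Real.Gamma_pos_of_pos (by linarith)
  refine ⟨?_, ?_, ?_⟩
  · intro j hj
    have hΓ2 : 0 < Real.Gamma (α/2 + j + 1) :=
      Real.Gamma_pos_of_pos (by positivity)
    have key := gamma_key α h1 h2 j hj
    unfold rhoC
    rcases Nat.even_or_odd j with he | ho
    · -- (-1)^j = 1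
      have hpow : (-1:ℝ)^j = 1 := he.neg_one_pow
      rw [hpow] at key ⊢
      rw [one_mul] at key
      apply div_nonpos_of_nonneg_of_nonpos
      · linarith
      · exact mul_nonpos_of_nonpos_of_nonneg key hΓ2.le
    · have hpow : (-1:ℝ)^j = -1 := ho.neg_one_pow
      rw [hpow] at key ⊢
      have hΓ1 : 0 ≤ Real.Gamma (α/2 - j + 1) := by linarith
      apply div_nonpos_of_nonpos_of_nonneg
      · linarith
      · exact mul_nonneg hΓ1 hΓ2.le
  · unfold rhoC
    norm_num
    ring_nf
  · rw [show rhoC α 0 = Real.Gamma (α + 1) / (Real.Gamma (α / 2 + 1)) ^ 2 by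
      unfold rhoC; norm_num; ring_nf]
    positivity
end

section
/- Let T_n = [t_{|i−j|}] be a real symmetric n×n Toeplitz matrix whose entries satisfy t₀ > 0, t₁ < t₂ < ⋯ < t_{n−1} < 0, and t₀ + 2∑_{i=1}^{n−1} t_i > 0. Let H_n(T_n) be the Hankel matrix whose constant antidiagonals equal t₂, …, t_{n−1}, 0, 0, 0, t_{n−1}, …, t₂, and define the τ matrix τ(T_n) = T_n − H_n(T_n). Then every eigenvalue λ of τ(T_n)^{−1}T_n satisfies 1/2 < λ < 3/2. -/
open Finset Matrix

/-- The real symmetric Toeplitz matrix `T_n = [t_{|i−j|}]`. -/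
def ToepAbs (n : ℕ) (t : ℕ → ℝ) : Matrix (Fin n) (Fin n) ℝ :=
  Matrix.of fun i j => t (((i : ℤ) - (j : ℤ)).natAbs)

/-- The Hankel correction `H_n(T_n)` whose constant antidiagonals (1-based index sum
`s = i + j` running over `2, …, 2n`) are `t₂, …, t_{n−1}, 0, 0, 0, t_{n−1}, …, t₂`. -/
def HankCorr (n : ℕ) (t : ℕ → ℝ) : Matrix (Fin n) (Fin n) ℝ :=
  Matrix.of fun i j =>
    if (i : ℕ) + (j : ℕ) + 2 ≤ n - 1 then t ((i : ℕ) + (j : ℕ) + 2)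
    else if n + 3 ≤ (i : ℕ) + (j : ℕ) + 2 then t (2 * n - (i : ℕ) - (j : ℕ))
    else 0

/-- The natural τ approximation `τ(T_n) = T_n − H_n(T_n)`. -/
def tauMat (n : ℕ) (t : ℕ → ℝ) : Matrix (Fin n) (Fin n) ℝ :=
  ToepAbs n t - HankCorr n t


lemma stmt14_abs3 (x y : ℝ) (hxy : x ≤ y) (hy : y ≤ 0) : |x - 3*y| ≤ -x - y := by
  rw [abs_le]; constructor <;> nlinarith

lemma stmt14_cross (a b c : ℝ) : -(|a| * (b^2 + c^2) / 2) ≤ b * (a * c) := by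
  rcases abs_cases a with ⟨h1, h2⟩ | ⟨h1, h2⟩ <;> rw [h1]
  · nlinarith [mul_nonneg h2 (sq_nonneg (b + c))]
  · nlinarith [mul_nonneg (by linarith : (0:ℝ) ≤ -a) (sq_nonneg (b - c))]

lemma stmt14_tmono (n : ℕ) (t : ℕ → ℝ)
    (hmono : ∀ i : ℕ, 1 ≤ i → i + 1 ≤ n - 1 → t i < t (i + 1)) :
    ∀ k l : ℕ, 1 ≤ k → k ≤ l → l ≤ n - 1 → t k ≤ t l := by
  intro k l hk hkl
  induction l, hkl using Nat.le_induction with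
  | base => intro _; exact le_refl _
  | succ l hkl ih =>
    intro hl
    exact le_trans (ih (by omega)) (le_of_lt (hmono l (by omega) hl))

lemma stmt14_erase_ite {n : ℕ} (i : Fin n) (h : Fin n → ℝ) :
    ∑ j ∈ Finset.univ.erase i, h j = ∑ j, if j = i then 0 else h j := by
  have h0 : (if i = i then (0:ℝ) else h i) = 0 := if_pos rfl
  rw [← Finset.add_sum_erase _ (fun j => if j = i then 0 else h j) (mem_univ i), h0, zero_add]
  exact (Finset.sum_congr rfl fun j hj => (if_neg (Finset.ne_of_mem_erase hj)).symm)

lemma stmt14_qform {n : ℕ} (M : Matrix (Fin n) (Fin n) ℝ) (r : ℝ)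
    (hsym : ∀ i j, M i j = M j i)
    (hdom : ∀ i, (∑ j ∈ Finset.univ.erase i, |M i j|) + r ≤ M i i)
    (x : Fin n → ℝ) :
    r * ∑ i, (x i)^2 ≤ x ⬝ᵥ (M *ᵥ x) := by
  have expand : x ⬝ᵥ (M *ᵥ x) = ∑ i, ∑ j, x i * (M i j * x j) := by
    simp [dotProduct, Matrix.mulVec, Finset.mul_sum]
  have key : ∀ i, M i i * (x i)^2 +
      ∑ j ∈ Finset.univ.erase i, -(|M i j| * ((x i)^2 + (x j)^2) / 2)
      ≤ ∑ j, x i * (M i j * x j) := by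
    intro i
    rw [← Finset.add_sum_erase _ (fun j => x i * (M i j * x j)) (mem_univ i)]
    have h1 : M i i * (x i)^2 = x i * (M i i * x i) := by ring
    rw [h1]
    gcongr with j hj
    exact stmt14_cross (M i j) (x i) (x j)
  have swap2 : ∑ i, ∑ j ∈ Finset.univ.erase i, |M i j| * (x j)^2
      = ∑ i, (∑ j ∈ Finset.univ.erase i, |M i j|) * (x i)^2 := by
    have hrw : ∀ i : Fin n, ∑ j ∈ Finset.univ.erase i, |M i j| * (x j)^2
        = ∑ j, if j = i then 0 else |M i j| * (x j)^2 := fun i => stmt14_erase_ite i _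
    simp only [hrw]
    rw [Finset.sum_comm]
    refine Finset.sum_congr rfl fun j _ => ?_
    rw [stmt14_erase_ite j (fun i => |M j i|), Finset.sum_mul]
    refine Finset.sum_congr rfl fun i _ => ?_
    rcases eq_or_ne i j with rfl | hij
    · simp
    · rw [if_neg (Ne.symm hij), if_neg hij, hsym i j]
  have inner : ∀ i, ∑ j ∈ Finset.univ.erase i, -(|M i j| * ((x i)^2 + (x j)^2) / 2)
      = -((∑ j ∈ Finset.univ.erase i, |M i j|) * (x i)^2 / 2)
        - (∑ j ∈ Finset.univ.erase i, |M i j| * (x j)^2) / 2 := by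
    intro i
    rw [Finset.sum_mul, Finset.sum_div, ← Finset.sum_neg_distrib, Finset.sum_div,
      ← Finset.sum_sub_distrib]
    exact Finset.sum_congr rfl fun j _ => by ring
  have sumInner : ∑ i, ∑ j ∈ Finset.univ.erase i, -(|M i j| * ((x i)^2 + (x j)^2) / 2)
      = -∑ i, (∑ j ∈ Finset.univ.erase i, |M i j|) * (x i)^2 := by
    simp only [inner]
    rw [Finset.sum_sub_distrib, Finset.sum_neg_distrib, ← Finset.sum_div, ← Finset.sum_div, swap2]
    ring
  calc r * ∑ i, (x i)^2 = ∑ i, r * (x i)^2 := by rw [Finset.mul_sum]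
    _ ≤ ∑ i, (M i i - ∑ j ∈ Finset.univ.erase i, |M i j|) * (x i)^2 := by
        refine Finset.sum_le_sum fun i _ => ?_
        have := hdom i
        exact mul_le_mul_of_nonneg_right (by linarith) (sq_nonneg _)
    _ = ∑ i, (M i i * (x i)^2
          + ∑ j ∈ Finset.univ.erase i, -(|M i j| * ((x i)^2 + (x j)^2) / 2)) := by
        rw [Finset.sum_add_distrib, sumInner]
        simp only [sub_mul]
        rw [Finset.sum_sub_distrib]
        ring
    _ ≤ ∑ i, ∑ j, x i * (M i j * x j) := Finset.sum_le_sum fun i _ => key i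
    _ = x ⬝ᵥ (M *ᵥ x) := expand.symm

lemma stmt14_det_ne {n : ℕ} (M : Matrix (Fin n) (Fin n) ℝ)
    (hpos : ∀ x : Fin n → ℝ, x ≠ 0 → 0 < x ⬝ᵥ (M *ᵥ x)) : M.det ≠ 0 := by
  intro h
  obtain ⟨v, hv, hMv⟩ := (Matrix.exists_mulVec_eq_zero_iff).mpr h
  have h2 := hpos v hv
  rw [hMv] at h2
  simp at h2

def stmt14_hfun (n : ℕ) (t : ℕ → ℝ) (i j : ℕ) : ℝ :=
  if i + j + 2 ≤ n - 1 then t (i + j + 2)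
  else if n + 3 ≤ i + j + 2 then t (2 * n - i - j) else 0

lemma stmt14_rowT (n : ℕ) (t : ℕ → ℝ) (i : ℕ) (hi : i < n) :
    ∑ j ∈ (Finset.range n).erase i, -t (((i : ℤ) - (j : ℤ)).natAbs)
      = (∑ k ∈ Finset.Icc 1 i, -t k) + ∑ k ∈ Finset.Icc 1 (n - 1 - i), -t k := by
  have hsplit : (Finset.range n).erase i = Finset.range i ∪ Finset.Ico (i+1) n := by
    ext a; simp only [Finset.mem_erase, Finset.mem_range, Finset.mem_union, Finset.mem_Ico]; omega
  have hdisj : Disjoint (Finset.range i) (Finset.Ico (i+1) n) := by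
    rw [Finset.disjoint_left]; intro a ha hb
    simp only [Finset.mem_range] at ha
    simp only [Finset.mem_Ico] at hb; omega
  rw [hsplit, Finset.sum_union hdisj]
  congr 1
  · refine Finset.sum_nbij' (fun j => i - j) (fun k => i - k) ?_ ?_ ?_ ?_ ?_ <;>
      intro a ha <;>
      simp only [Finset.mem_range, Finset.mem_Icc] at ha ⊢ <;>
      (first | omega | (congr 2; omega))
  · refine Finset.sum_nbij' (fun j => j - i) (fun k => k + i) ?_ ?_ ?_ ?_ ?_ <;>
      intro a ha <;>
      simp only [Finset.mem_Ico, Finset.mem_Icc] at ha ⊢ <;>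
      (first | omega | (congr 2; omega))

lemma stmt14_rowH (n : ℕ) (t : ℕ → ℝ) (i : ℕ) (hi : i < n) :
    ∑ j ∈ Finset.range n, -stmt14_hfun n t i j
      = (∑ k ∈ Finset.Icc (i+2) (n-1), -t k) + ∑ k ∈ Finset.Icc (n+1-i) (n-1), -t k := by
  have hpt : ∀ j, -stmt14_hfun n t i j
      = (if i + j + 2 ≤ n - 1 then -t (i+j+2) else 0)
        + (if n + 3 ≤ i + j + 2 then -t (2*n - i - j) else 0) := by
    intro j; unfold stmt14_hfun
    split_ifs with h1 h2 <;> (first | (exfalso; omega) | ring)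
  simp only [hpt]
  rw [Finset.sum_add_distrib]
  congr 1
  · rw [Finset.sum_ite, Finset.sum_const_zero, add_zero]
    have hfil : (Finset.range n).filter (fun j => i + j + 2 ≤ n - 1)
        = Finset.range (n - 2 - i) := by
      ext a; simp only [Finset.mem_filter, Finset.mem_range]; omega
    rw [hfil]
    refine Finset.sum_nbij' (fun j => i + j + 2) (fun k => k - i - 2) ?_ ?_ ?_ ?_ ?_ <;>
      intro a ha <;>
      simp only [Finset.mem_range, Finset.mem_Icc] at ha ⊢ <;>
      (first | omega | rfl | (congr 2; omega))
  · rw [Finset.sum_ite, Finset.sum_const_zero, add_zero]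
    have hfil : (Finset.range n).filter (fun j => n + 3 ≤ i + j + 2)
        = Finset.Icc (n+1-i) (n-1) := by
      ext a; simp only [Finset.mem_filter, Finset.mem_range, Finset.mem_Icc]; omega
    rw [hfil]
    refine Finset.sum_nbij' (fun j => 2*n - i - j) (fun k => 2*n - i - k) ?_ ?_ ?_ ?_ ?_ <;>
      intro a ha <;>
      simp only [Finset.mem_Icc] at ha ⊢ <;>
      (first | omega | rfl | (congr 2; omega))

lemma stmt14_rowcore (n : ℕ) (t : ℕ → ℝ) (i : ℕ) (hi : i < n)
    (htneg : ∀ k, 1 ≤ k → k ≤ n - 1 → t k < 0) :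
    (∑ j ∈ (Finset.range n).erase i, -t (((i : ℤ) - (j : ℤ)).natAbs))
      + (∑ j ∈ Finset.range n, -stmt14_hfun n t i j)
      ≤ 2 * ∑ k ∈ Finset.Icc 1 (n-1), -t k := by
  rw [stmt14_rowT n t i hi, stmt14_rowH n t i hi]
  have hnn : ∀ k ∈ Finset.Icc 1 (n-1), 0 ≤ -t k := fun k hk => by
    simp only [Finset.mem_Icc] at hk
    have := htneg k hk.1 hk.2; linarith
  have bound : ∀ (s₁ s₂ : Finset ℕ), Disjoint s₁ s₂ → s₁ ⊆ Finset.Icc 1 (n-1) →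
      s₂ ⊆ Finset.Icc 1 (n-1) →
      (∑ k ∈ s₁, -t k) + ∑ k ∈ s₂, -t k ≤ ∑ k ∈ Finset.Icc 1 (n-1), -t k := by
    intro s₁ s₂ hd h1 h2
    rw [← Finset.sum_union hd]
    refine Finset.sum_le_sum_of_subset_of_nonneg (Finset.union_subset h1 h2) ?_
    intro k hk _; exact hnn k hk
  have c1 : (∑ k ∈ Finset.Icc 1 i, -t k) + ∑ k ∈ Finset.Icc (i+2) (n-1), -t k
      ≤ ∑ k ∈ Finset.Icc 1 (n-1), -t k := by
    refine bound _ _ ?_ ?_ ?_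
    · rw [Finset.disjoint_left]; intro a ha hb
      simp only [Finset.mem_Icc] at ha hb; omega
    · intro a ha; simp only [Finset.mem_Icc] at ha ⊢; omega
    · intro a ha; simp only [Finset.mem_Icc] at ha ⊢; omega
  have c2 : (∑ k ∈ Finset.Icc 1 (n-1-i), -t k) + ∑ k ∈ Finset.Icc (n+1-i) (n-1), -t k
      ≤ ∑ k ∈ Finset.Icc 1 (n-1), -t k := by
    refine bound _ _ ?_ ?_ ?_
    · rw [Finset.disjoint_left]; intro a ha hb
      simp only [Finset.mem_Icc] at ha hb; omega
    · intro a ha; simp only [Finset.mem_Icc] at ha ⊢; omega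
    · intro a ha; simp only [Finset.mem_Icc] at ha ⊢; omega
  linarith

lemma stmt14_fin_erase (n : ℕ) (i : Fin n) (f : ℕ → ℝ) :
    ∑ j ∈ Finset.univ.erase i, f (j : ℕ) = ∑ j ∈ (Finset.range n).erase (i : ℕ), f j := by
  refine Finset.sum_bij (fun a _ => (a : ℕ)) ?_ ?_ ?_ ?_
  · intro a ha
    simp only [Finset.mem_erase, Finset.mem_range]
    exact ⟨fun h => (Finset.mem_erase.mp ha).1 (Fin.val_injective h), a.isLt⟩
  · intro a₁ _ a₂ _ h; exact Fin.val_injective h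
  · intro b hb
    have hb' := Finset.mem_erase.mp hb
    have hbn : b < n := Finset.mem_range.mp hb'.2
    exact ⟨⟨b, hbn⟩, Finset.mem_erase.mpr ⟨Fin.ne_of_val_ne hb'.1, Finset.mem_univ _⟩, rfl⟩
  · intro a _; rfl

lemma stmt14_fin_univ (n : ℕ) (f : ℕ → ℝ) :
    ∑ j : Fin n, f (j : ℕ) = ∑ j ∈ Finset.range n, f j :=
  Fin.sum_univ_eq_sum_range f n

/-- the defining entries -/
lemma stmt14_Hk_eq (n : ℕ) (t : ℕ → ℝ) (i j : Fin n) :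
    HankCorr n t i j = stmt14_hfun n t (i : ℕ) (j : ℕ) := rfl

lemma stmt14_A_eq (n : ℕ) (t : ℕ → ℝ) (i j : Fin n) :
    ToepAbs n t i j = t ((((i:ℕ):ℤ) - ((j:ℕ):ℤ)).natAbs) := rfl

/-- case analysis on Hankel entries -/
lemma stmt14_Hk_cases (n : ℕ) (t : ℕ → ℝ) (i j : Fin n) :
    HankCorr n t i j = 0 ∨ ∃ k : ℕ,
      ((((i:ℕ):ℤ) - ((j:ℕ):ℤ)).natAbs ≤ k ∧ 1 ≤ k ∧ k ≤ n - 1 ∧ HankCorr n t i j = t k) := by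
  have hi := i.isLt
  have hj := j.isLt
  rw [stmt14_Hk_eq]
  unfold stmt14_hfun
  split_ifs with h1 h2
  · right; exact ⟨(i:ℕ) + (j:ℕ) + 2, by omega, by omega, by omega, rfl⟩
  · right; exact ⟨2 * n - (i:ℕ) - (j:ℕ), by omega, by omega, by omega, rfl⟩
  · left; rfl

lemma stmt14_Hk_nonpos (n : ℕ) (t : ℕ → ℝ)
    (htneg : ∀ k, 1 ≤ k → k ≤ n - 1 → t k < 0) (i j : Fin n) :
    HankCorr n t i j ≤ 0 := by
  rcases stmt14_Hk_cases n t i j with h | ⟨k, _, hk1, hk2, hk3⟩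
  · rw [h]
  · rw [hk3]; exact le_of_lt (htneg k hk1 hk2)

lemma stmt14_A_neg (n : ℕ) (t : ℕ → ℝ)
    (htneg : ∀ k, 1 ≤ k → k ≤ n - 1 → t k < 0) (i j : Fin n) (hij : i ≠ j) :
    ToepAbs n t i j < 0 := by
  rw [stmt14_A_eq]
  refine htneg _ ?_ ?_
  · have : (i:ℕ) ≠ (j:ℕ) := fun h => hij (Fin.val_injective h)
    omega
  · have hi := i.isLt; have hj := j.isLt; omega

lemma stmt14_hfun_symm (n : ℕ) (t : ℕ → ℝ) (a b : ℕ) :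
    stmt14_hfun n t a b = stmt14_hfun n t b a := by
  unfold stmt14_hfun
  rw [show a + b + 2 = b + a + 2 by omega, show 2*n - a - b = 2*n - b - a by omega]

lemma stmt14_symP (n : ℕ) (t : ℕ → ℝ) (i j : Fin n) :
    (ToepAbs n t + HankCorr n t) i j = (ToepAbs n t + HankCorr n t) j i := by
  simp only [Matrix.add_apply, stmt14_A_eq, stmt14_Hk_eq]
  rw [stmt14_hfun_symm]
  have h : ((((i:ℕ)):ℤ) - (((j:ℕ)):ℤ)).natAbs = ((((j:ℕ)):ℤ) - (((i:ℕ)):ℤ)).natAbs := by omega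
  rw [h]

lemma stmt14_symQ (n : ℕ) (t : ℕ → ℝ) (i j : Fin n) :
    (ToepAbs n t - (3:ℝ) • HankCorr n t) i j = (ToepAbs n t - (3:ℝ) • HankCorr n t) j i := by
  simp only [Matrix.sub_apply, Matrix.smul_apply, stmt14_A_eq, stmt14_Hk_eq, smul_eq_mul]
  rw [stmt14_hfun_symm]
  have h : ((((i:ℕ)):ℤ) - (((j:ℕ)):ℤ)).natAbs = ((((j:ℕ)):ℤ) - (((i:ℕ)):ℤ)).natAbs := by omega
  rw [h]

/-- the common row estimate -/
lemma stmt14_rowmain (n : ℕ) (t : ℕ → ℝ)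
    (htneg : ∀ k, 1 ≤ k → k ≤ n - 1 → t k < 0) (i : Fin n) :
    ∑ j ∈ Finset.univ.erase i, (-(ToepAbs n t i j) - HankCorr n t i j)
      ≤ 2 * (∑ k ∈ Finset.Icc 1 (n-1), -t k) + HankCorr n t i i := by
  have e1 : ∑ j ∈ Finset.univ.erase i, (-(ToepAbs n t i j) - HankCorr n t i j)
      = (∑ j ∈ Finset.univ.erase i, -(ToepAbs n t i j))
        + ∑ j ∈ Finset.univ.erase i, -(HankCorr n t i j) := by
    rw [← Finset.sum_add_distrib]
    exact Finset.sum_congr rfl fun j _ => by ring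
  have e2 : ∑ j ∈ Finset.univ.erase i, -(ToepAbs n t i j)
      = ∑ j ∈ (Finset.range n).erase (i:ℕ), -t ((((i:ℕ):ℤ) - (j:ℤ)).natAbs) :=
    stmt14_fin_erase n i (fun jn => -t ((((i:ℕ):ℤ) - ((jn:ℕ):ℤ)).natAbs))
  have e3 : ∑ j ∈ Finset.univ.erase i, -(HankCorr n t i j)
      = (∑ j ∈ Finset.range n, -(stmt14_hfun n t (i:ℕ) j)) + HankCorr n t i i := by
    rw [Finset.sum_erase_eq_sub (Finset.mem_univ i)]
    rw [show ∑ j : Fin n, -(HankCorr n t i j) = ∑ j ∈ Finset.range n, -(stmt14_hfun n t (i:ℕ) j)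
      from stmt14_fin_univ n (fun jn => -(stmt14_hfun n t (i:ℕ) jn))]
    rw [stmt14_Hk_eq]
    ring
  rw [e1, e2, e3]
  have := stmt14_rowcore n t (i:ℕ) i.isLt htneg
  linarith

/-- If `t₀ > 0`, `t₁ < t₂ < ⋯ < t_{n−1} < 0` and `t₀ + 2∑_{i=1}^{n−1} t_i > 0`, then every
eigenvalue `λ` of `τ(T_n)⁻¹ T_n` satisfies `1/2 < λ < 3/2`. -/
theorem stmt14 (n : ℕ) (t : ℕ → ℝ)
    (ht0 : 0 < t 0)
    (hmono : ∀ i : ℕ, 1 ≤ i → i + 1 ≤ n - 1 → t i < t (i + 1))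
    (hneg : t (n - 1) < 0)
    (hsum : 0 < t 0 + 2 * ∑ i ∈ Finset.Icc 1 (n - 1), t i) :
    ∀ μ ∈ spectrum ℝ ((tauMat n t)⁻¹ * ToepAbs n t), 1 / 2 < μ ∧ μ < 3 / 2 := by
  intro μ hμ
  have htneg : ∀ k, 1 ≤ k → k ≤ n - 1 → t k < 0 := fun k h1 h2 =>
    lt_of_le_of_lt (stmt14_tmono n t hmono k (n-1) h1 h2 le_rfl) hneg
  set R : ℝ := t 0 + 2 * ∑ i ∈ Finset.Icc 1 (n - 1), t i with hRdef
  have hRpos : 0 < R := hsum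
  set A := ToepAbs n t with hA
  set Hk := HankCorr n t with hHk
  set P := A + Hk with hP
  set Q := A - (3:ℝ) • Hk with hQ
  -- diagonal entries
  have hdiagA : ∀ i : Fin n, A i i = t 0 := fun i => by
    rw [hA, stmt14_A_eq]; norm_num
  -- dominance for P
  have hdomP : ∀ i, (∑ j ∈ Finset.univ.erase i, |P i j|) + R ≤ P i i := by
    intro i
    have habs : ∀ j ∈ Finset.univ.erase i, |P i j| = -(A i j) - Hk i j := by
      intro j hj
      have hij : i ≠ j := fun h => (Finset.mem_erase.mp hj).1 h.symm
      have h1 : A i j < 0 := stmt14_A_neg n t htneg i j hij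
      have h2 : Hk i j ≤ 0 := stmt14_Hk_nonpos n t htneg i j
      rw [hP, Matrix.add_apply, abs_of_nonpos (by linarith)]
      ring
    rw [Finset.sum_congr rfl habs]
    have hrow := stmt14_rowmain n t htneg i
    have hsum2 : 2 * (∑ k ∈ Finset.Icc 1 (n-1), -t k) = t 0 - R := by
      rw [hRdef, Finset.sum_neg_distrib]; ring
    rw [hP, Matrix.add_apply, hdiagA i]
    rw [← hA, ← hHk] at hrow
    linarith
  -- dominance for Q
  have hdomQ : ∀ i, (∑ j ∈ Finset.univ.erase i, |Q i j|) + R ≤ Q i i := by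
    intro i
    have habs : ∀ j ∈ Finset.univ.erase i, |Q i j| ≤ -(A i j) - Hk i j := by
      intro j hj
      have hij : i ≠ j := fun h => (Finset.mem_erase.mp hj).1 h.symm
      have h1 : A i j < 0 := stmt14_A_neg n t htneg i j hij
      rw [hQ, Matrix.sub_apply, Matrix.smul_apply, smul_eq_mul]
      rcases stmt14_Hk_cases n t i j with h0 | ⟨k, hk0, hk1, hk2, hk3⟩
      · rw [← hHk] at h0
        rw [h0]
        rw [abs_of_nonpos (by linarith)]
        ring_nf
        exact le_refl _
      · rw [← hHk] at hk3
        rw [hk3]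
        have hd1 : (1:ℕ) ≤ (((i:ℕ):ℤ) - ((j:ℕ):ℤ)).natAbs := by
          have : (i:ℕ) ≠ (j:ℕ) := fun h => hij (Fin.val_injective h)
          omega
        have hx : A i j ≤ t k := by
          rw [hA, stmt14_A_eq]
          exact stmt14_tmono n t hmono _ k hd1 hk0 hk2
        have hy : t k ≤ 0 := le_of_lt (htneg k hk1 hk2)
        exact stmt14_abs3 (A i j) (t k) hx hy
    have hrow := stmt14_rowmain n t htneg i
    rw [← hA, ← hHk] at hrow
    have hsum2 : 2 * (∑ k ∈ Finset.Icc 1 (n-1), -t k) = t 0 - R := by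
      rw [hRdef, Finset.sum_neg_distrib]; ring
    have hQii : Q i i = t 0 - 3 * Hk i i := by
      rw [hQ, Matrix.sub_apply, Matrix.smul_apply, smul_eq_mul, hdiagA i]
    have hHkii : Hk i i ≤ 0 := stmt14_Hk_nonpos n t htneg i i
    have hle : ∑ j ∈ Finset.univ.erase i, |Q i j|
        ≤ ∑ j ∈ Finset.univ.erase i, (-(A i j) - Hk i j) := Finset.sum_le_sum habs
    rw [hQii]
    linarith
  -- quadratic forms
  have formP : ∀ x : Fin n → ℝ, R * ∑ i, (x i)^2 ≤ x ⬝ᵥ (P *ᵥ x) :=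
    stmt14_qform P R (fun i j => stmt14_symP n t i j) hdomP
  have formQ : ∀ x : Fin n → ℝ, R * ∑ i, (x i)^2 ≤ x ⬝ᵥ (Q *ᵥ x) :=
    stmt14_qform Q R (fun i j => stmt14_symQ n t i j) hdomQ
  -- positive combinations
  have hposCombo : ∀ a b : ℝ, 0 ≤ a → 0 ≤ b → 0 < a + b →
      ∀ x : Fin n → ℝ, x ≠ 0 → 0 < x ⬝ᵥ ((a • P + b • Q) *ᵥ x) := by
    intro a b ha hb hab x hx
    have hS : 0 < ∑ i, (x i)^2 := by
      have hex : ∃ i, x i ≠ 0 := by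
        by_contra h; push_neg at h; exact hx (funext h)
      obtain ⟨i0, hi0⟩ := hex
      have h1 : (x i0)^2 ≤ ∑ i, (x i)^2 :=
        Finset.single_le_sum (fun i _ => sq_nonneg (x i)) (Finset.mem_univ i0)
      have h2 : 0 < (x i0)^2 :=
        lt_of_le_of_ne (sq_nonneg _) (Ne.symm (pow_ne_zero 2 hi0))
      linarith
    have hexp : x ⬝ᵥ ((a • P + b • Q) *ᵥ x)
        = a * (x ⬝ᵥ (P *ᵥ x)) + b * (x ⬝ᵥ (Q *ᵥ x)) := by
      rw [Matrix.add_mulVec, Matrix.smul_mulVec, Matrix.smul_mulVec,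
        dotProduct_add, dotProduct_smul, dotProduct_smul, smul_eq_mul, smul_eq_mul]
    rw [hexp]
    have h1 : a * (R * ∑ i, (x i)^2) ≤ a * (x ⬝ᵥ (P *ᵥ x)) :=
      mul_le_mul_of_nonneg_left (formP x) ha
    have h2 : b * (R * ∑ i, (x i)^2) ≤ b * (x ⬝ᵥ (Q *ᵥ x)) :=
      mul_le_mul_of_nonneg_left (formQ x) hb
    have h3 : 0 < (a + b) * (R * ∑ i, (x i)^2) :=
      mul_pos hab (mul_pos hRpos hS)
    nlinarith
  -- tau
  have hτcombo : tauMat n t = (1/2 : ℝ) • P + (1/2 : ℝ) • Q := by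
    ext i j
    simp only [tauMat, hP, hQ, hA, hHk, Matrix.sub_apply, Matrix.add_apply,
      Matrix.smul_apply, smul_eq_mul]
    ring
  have hτdet : (tauMat n t).det ≠ 0 := by
    refine stmt14_det_ne _ ?_
    intro x hx
    rw [hτcombo]
    exact hposCombo (1/2) (1/2) (by norm_num) (by norm_num) (by norm_num) x hx
  have hτunit : IsUnit (tauMat n t).det := isUnit_iff_ne_zero.mpr hτdet
  have hinvdet : ((tauMat n t)⁻¹).det ≠ 0 := by
    rw [Matrix.det_nonsing_inv, Ring.inverse_eq_inv']
    exact inv_ne_zero hτdet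
  rw [spectrum.mem_iff] at hμ
  have hid : algebraMap ℝ (Matrix (Fin n) (Fin n) ℝ) μ - (tauMat n t)⁻¹ * ToepAbs n t
      = (tauMat n t)⁻¹ * (μ • tauMat n t - ToepAbs n t) := by
    rw [Matrix.mul_sub, Matrix.mul_smul, Matrix.nonsing_inv_mul _ hτunit,
      Algebra.algebraMap_eq_smul_one]
  have hunit_of : ∀ (M : Matrix (Fin n) (Fin n) ℝ), M.det ≠ 0 →
      IsUnit (algebraMap ℝ (Matrix (Fin n) (Fin n) ℝ) μ - (tauMat n t)⁻¹ * ToepAbs n t) ∨ True := fun _ _ => Or.inr trivial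
  constructor
  · by_contra hc
    push_neg at hc
    have hcombo : A - μ • tauMat n t = ((3 - 2*μ)/4) • P + ((1 - 2*μ)/4) • Q := by
      ext i j
      simp only [tauMat, hP, hQ, hA, hHk, Matrix.sub_apply, Matrix.add_apply,
        Matrix.smul_apply, smul_eq_mul]
      ring
    have hdetAμ : (A - μ • tauMat n t).det ≠ 0 := by
      refine stmt14_det_ne _ ?_
      intro x hx
      rw [hcombo]
      exact hposCombo _ _ (by linarith) (by linarith) (by linarith) x hx
    have hdet2 : (μ • tauMat n t - ToepAbs n t).det ≠ 0 := by
      have hneg' : μ • tauMat n t - ToepAbs n t = -(A - μ • tauMat n t) := by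
        rw [hA, neg_sub]
      rw [hneg', Matrix.det_neg]
      exact mul_ne_zero (pow_ne_zero _ (by norm_num)) hdetAμ
    refine hμ ?_
    rw [hid, Matrix.isUnit_iff_isUnit_det, Matrix.det_mul]
    exact isUnit_iff_ne_zero.mpr (mul_ne_zero hinvdet hdet2)
  · by_contra hc
    push_neg at hc
    have hcombo : μ • tauMat n t - A = ((2*μ - 3)/4) • P + ((2*μ - 1)/4) • Q := by
      ext i j
      simp only [tauMat, hP, hQ, hA, hHk, Matrix.sub_apply, Matrix.add_apply,
        Matrix.smul_apply, smul_eq_mul]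
      ring
    have hdet2 : (μ • tauMat n t - ToepAbs n t).det ≠ 0 := by
      rw [← hA]
      refine stmt14_det_ne _ ?_
      intro x hx
      rw [hcombo]
      exact hposCombo _ _ (by linarith) (by linarith) (by linarith) x hx
    refine hμ ?_
    rw [hid, Matrix.isUnit_iff_isUnit_det, Matrix.det_mul]
    exact isUnit_iff_ne_zero.mpr (mul_ne_zero hinvdet hdet2)
end
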